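/- Assume h₁, h₂ are continuously differentiable and the quotient h̃₁ := h₁/h₂ has nonpositive derivative on [0,∞). Let (y₁,y₂) : [0,T) → (0,∞)² be a differentiable solution of the ODE system with y₁(0), y₂(0) > 0. If a₁ = 0 and a₂ = 0, then y₁(t) ≥ y₁(0)·(y₂(t)/y₂(0))^{h̃₁(t)} for all t ∈ [0,T), where h̃₁(t) = h₁(t)/h₂(t). -/

import Mathlib

open Set

/-- Lemma 5.1(c) of the paper. If `h₁,h₂` are continuously
differentiable with `(h₁/h₂)' ≤ 0` on `[0,∞)`, `(y₁,y₂)` is a positive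
differentiable solution of the ODE system on `[0,T)`, `a₁ = p₂₁-p₁₁+1 = 0` and
`a₂ = p₁₂-p₂₂+1 = 0`, then `y₁(t) ≥ y₁(0) (y₂(t)/y₂(0))^{h₁(t)/h₂(t)}`
on `[0,T)`. -/
theorem statement10 (p11 p12 p21 p22 : ℝ)
    (hp11 : 0 ≤ p11) (hp12 : 0 ≤ p12) (hp21 : 0 ≤ p21) (hp22 : 0 ≤ p22)
    (h1 h2 : ℝ → ℝ)
    (hh1c : ContDiffOn ℝ 1 h1 (Set.Ici 0)) (hh2c : ContDiffOn ℝ 1 h2 (Set.Ici 0))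
    (hh1p : ∀ t : ℝ, 0 ≤ t → 0 < h1 t) (hh2p : ∀ t : ℝ, 0 ≤ t → 0 < h2 t)
    (hdec : ∀ t : ℝ, 0 ≤ t →
      derivWithin (fun s => h1 s / h2 s) (Set.Ici 0) t ≤ 0)
    (T : ℝ) (hT : 0 < T)
    (y1 y2 : ℝ → ℝ)
    (hy1pos : ∀ t ∈ Set.Ico (0:ℝ) T, 0 < y1 t)
    (hy2pos : ∀ t ∈ Set.Ico (0:ℝ) T, 0 < y2 t)
    (hy1d : ∀ t ∈ Set.Ico (0:ℝ) T,
      HasDerivWithinAt y1 (h1 t * y1 t ^ p11 * y2 t ^ p12) (Set.Ico 0 T) t)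
    (hy2d : ∀ t ∈ Set.Ico (0:ℝ) T,
      HasDerivWithinAt y2 (h2 t * y2 t ^ p22 * y1 t ^ p21) (Set.Ico 0 T) t)
    (ha1 : p21 - p11 + 1 = 0) (ha2 : p12 - p22 + 1 = 0) :
    ∀ t ∈ Set.Ico (0:ℝ) T,
      y1 0 * (y2 t / y2 0) ^ (h1 t / h2 t) ≤ y1 t := by
  intro t ht
  set g : ℝ → ℝ := fun s => h1 s / h2 s with hg
  have hIcoIci : Ico (0:ℝ) T ⊆ Ici 0 := Ico_subset_Ici_self
  have h0mem : (0:ℝ) ∈ Ico (0:ℝ) T := ⟨le_refl 0, hT⟩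
  have hgdiff : DifferentiableOn ℝ g (Ici 0) :=
    (hh1c.differentiableOn one_ne_zero).div (hh2c.differentiableOn one_ne_zero)
      fun x hx => (hh2p x hx).ne'
  have hgd : ∀ s ∈ Ico (0:ℝ) T,
      HasDerivWithinAt g (derivWithin g (Ici 0) s) (Ico 0 T) s :=
    fun s hs => ((hgdiff s (hIcoIci hs)).hasDerivWithinAt).mono hIcoIci
  -- monotonicity of y2
  have hy2cont : ContinuousOn y2 (Ico 0 T) := fun s hs => (hy2d s hs).continuousWithinAt
  have hy2mono : MonotoneOn y2 (Ico 0 T) := by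
    apply monotoneOn_of_deriv_nonneg (convex_Ico 0 T) hy2cont
    · intro x hx
      rw [interior_Ico] at hx
      exact ((hy2d x ⟨hx.1.le, hx.2⟩).hasDerivAt
        (Ico_mem_nhds hx.1 hx.2)).differentiableAt.differentiableWithinAt
    · intro x hx
      rw [interior_Ico] at hx
      have hx' : x ∈ Ico (0:ℝ) T := ⟨hx.1.le, hx.2⟩
      have hd := ((hy2d x hx').hasDerivAt (Ico_mem_nhds hx.1 hx.2)).deriv
      rw [hd]
      have h2p := hh2p x hx.1.le
      have hy1p := hy1pos x hx'
      have hy2p := hy2pos x hx'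
      positivity
  -- the auxiliary function F
  set F : ℝ → ℝ := fun s => Real.log (y1 s) - Real.log (y1 0) -
    g s * (Real.log (y2 s) - Real.log (y2 0)) with hF
  have hFd : ∀ s ∈ Ico (0:ℝ) T,
      HasDerivWithinAt F
        (-(derivWithin g (Ici 0) s) * (Real.log (y2 s) - Real.log (y2 0)))
        (Ico 0 T) s := by
    intro s hs
    have hy1 := hy1pos s hs
    have hy2 := hy2pos s hs
    have hl1 : HasDerivWithinAt (fun u => Real.log (y1 u))
        ((h1 s * y1 s ^ p11 * y2 s ^ p12) / y1 s) (Ico 0 T) s :=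
      (hy1d s hs).log hy1.ne'
    have hl2 : HasDerivWithinAt (fun u => Real.log (y2 u))
        ((h2 s * y2 s ^ p22 * y1 s ^ p21) / y2 s) (Ico 0 T) s :=
      (hy2d s hs).log hy2.ne'
    have hprod := (hgd s hs).mul (hl2.sub_const (Real.log (y2 0)))
    have hmain := (hl1.sub_const (Real.log (y1 0))).sub hprod
    refine hmain.congr_deriv ?_
    have hkey : (h1 s * y1 s ^ p11 * y2 s ^ p12) / y1 s
        = g s * ((h2 s * y2 s ^ p22 * y1 s ^ p21) / y2 s) := by
      have hp11' : p11 = p21 + 1 := by linarith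
      have hp22' : p22 = p12 + 1 := by linarith
      have h2ne : h2 s ≠ 0 := (hh2p s (hIcoIci hs)).ne'
      rw [hp11', hp22', Real.rpow_add hy1, Real.rpow_add hy2,
        Real.rpow_one, Real.rpow_one, hg]
      field_simp
    rw [hkey]; ring
  have hFcont : ContinuousOn F (Ico 0 T) := fun s hs => (hFd s hs).continuousWithinAt
  have hFmono : MonotoneOn F (Ico 0 T) := by
    apply monotoneOn_of_deriv_nonneg (convex_Ico 0 T) hFcont
    · intro x hx
      rw [interior_Ico] at hx
      exact ((hFd x ⟨hx.1.le, hx.2⟩).hasDerivAt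
        (Ico_mem_nhds hx.1 hx.2)).differentiableAt.differentiableWithinAt
    · intro x hx
      rw [interior_Ico] at hx
      have hx' : x ∈ Ico (0:ℝ) T := ⟨hx.1.le, hx.2⟩
      have hd := ((hFd x hx').hasDerivAt (Ico_mem_nhds hx.1 hx.2)).deriv
      rw [hd]
      have h1' : 0 ≤ -(derivWithin g (Ici 0) x) := neg_nonneg.2 (hdec x hx.1.le)
      have h2' : 0 ≤ Real.log (y2 x) - Real.log (y2 0) := by
        have hle : y2 0 ≤ y2 x := hy2mono h0mem hx' hx.1.le
        have := Real.log_le_log (hy2pos 0 h0mem) hle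
        linarith
      exact mul_nonneg h1' h2'
  have hy1t := hy1pos t ht
  have hy10 := hy1pos 0 h0mem
  have hy2t := hy2pos t ht
  have hy20 := hy2pos 0 h0mem
  have hFt : 0 ≤ F t := by
    have hmt := hFmono h0mem ht ht.1
    have hF0 : F 0 = 0 := by simp [hF]
    linarith
  have hFt' : Real.log (y1 0) + g t * (Real.log (y2 t) - Real.log (y2 0))
      ≤ Real.log (y1 t) := by
    simp only [hF] at hFt; linarith
  calc y1 0 * (y2 t / y2 0) ^ (g t)
      = Real.exp (Real.log (y1 0)) *
        Real.exp ((Real.log (y2 t) - Real.log (y2 0)) * g t) := by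
        rw [Real.exp_log hy10, Real.rpow_def_of_pos (div_pos hy2t hy20),
          Real.log_div hy2t.ne' hy20.ne']
    _ = Real.exp (Real.log (y1 0) + g t * (Real.log (y2 t) - Real.log (y2 0))) := by
        rw [← Real.exp_add]; ring_nf
    _ ≤ Real.exp (Real.log (y1 t)) := Real.exp_le_exp.2 hFt'
    _ = y1 t := Real.exp_log hy1t
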